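/- Let u, v be vertices of a connected graph G with shortest-path distance d_G(u,v) = k. Then every node of the unfolding tree F_k^u representing v has depth exactly k and is contained in the 0-redundant neighborhood tree T_{k,0}^u; consequently the number of nodes representing v is the same in F_k^u, in T_{k,1}^u, and in T_{k,0}^u, and equals the number of shortest paths from u to v. -/

import Mathlib

open scoped Classical

universe u v

/-- A rooted labeled (unordered) tree: a root label together with a list of
child subtrees.  The list order is irrelevant for the isomorphism relation. -/
inductive LTree (L : Type u) : Type u
  | node : L → List (LTree L) → LTree L

namespace LTree

variable {L : Type u} {L' C : Type v}

/-- The label of the root. -/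
def label : LTree L → L
  | node a _ => a

/-- The child subtrees of the root. -/
def children : LTree L → List (LTree L)
  | node _ ts => ts

/-- Isomorphism of rooted labeled trees: there is a bijection between the node
sets preserving the root, the parent–child relation and node labels; for our
representation this means equal root labels and children that correspond, up to
a permutation, to pairwise isomorphic subtrees. -/
inductive Iso : LTree L → LTree L → Prop
  | node (a : L) {ts us vs : List (LTree L)} :
      List.Forall₂ Iso ts vs → vs.Perm us → Iso (node a ts) (node a us)

/-- `Embeds t s` : `t` is an induced rooted subtree of `s`, i.e. the nodes of
`t` inject into the nodes of `s` preserving the root, labels and the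
parent–child relation. -/
inductive Embeds : LTree L → LTree L → Prop
  | node (a : L) {ts us vs : List (LTree L)} :
      List.Forall₂ Embeds ts vs → vs.Subperm us → Embeds (node a ts) (node a us)

/-- Number of nodes of a rooted tree. -/
def size : LTree L → ℕ
  | node _ ts => 1 + (ts.attach.map (fun c => size c.1)).sum
decreasing_by simp_wf; have := List.sizeOf_lt_of_mem c.2; omega

/-- Relabel a tree by `f`. -/
def map (f : L → L') : LTree L → LTree L'
  | node a ts => node (f a) (ts.attach.map (fun c => map f c.1))
decreasing_by simp_wf; have := List.sizeOf_lt_of_mem c.2; omega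

/-- Number of nodes of the tree carrying label `x`. -/
def countLabel [DecidableEq L] (x : L) : LTree L → ℕ
  | node a ts => (if a = x then 1 else 0) + (ts.attach.map (fun c => countLabel x c.1)).sum
decreasing_by simp_wf; have := List.sizeOf_lt_of_mem c.2; omega

/-- Number of nodes at depth `d` carrying label `x`. -/
def countAt [DecidableEq L] (x : L) : ℕ → LTree L → ℕ
  | 0, node a _ => if a = x then 1 else 0
  | d+1, node _ ts => (ts.attach.map (fun c => countAt x d c.1)).sum
termination_by _ t => sizeOf t
decreasing_by simp_wf; have := List.sizeOf_lt_of_mem c.2; omega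

/-- `SubtreeAt t d s` : `s` is the subtree of `t` rooted at one of the nodes of
`t` at depth `d`. -/
inductive SubtreeAt : LTree L → ℕ → LTree L → Prop
  | refl (t : LTree L) : SubtreeAt t 0 t
  | step {t c s : LTree L} {d : ℕ} : c ∈ t.children → SubtreeAt c d s → SubtreeAt t (d+1) s

/-- The AHU canonical value: `ahu f t = f (label t) {{ ahu f c | c child of t }}`,
computed bottom-up (a leaf gets `f (label) ∅`). -/
noncomputable def ahu (f : L → Multiset C → C) : LTree L → C
  | node a ts => f a (↑(ts.attach.map (fun c => ahu f c.1)) : Multiset C)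
decreasing_by simp_wf; have := List.sizeOf_lt_of_mem c.2; omega

end LTree

section Graph

variable {V : Type u} {X : Type v}

/-- The unfolding tree `F_i^v` of height `i` of the vertex `v`, with node labels
given by `μ` (a node representing the graph vertex `x` is labeled `μ x`). -/
noncomputable def SimpleGraph.unfoldingTree (G : SimpleGraph V) [Fintype V] (μ : V → X) :
    ℕ → V → LTree X
  | 0, u => .node (μ u) []
  | i+1, u => .node (μ u) ((G.neighborFinset u).toList.map (G.unfoldingTree μ i))

/-- Auxiliary recursion for `k`-redundant neighborhood trees: `r` is the root
vertex, `d` is the current depth and `x` the currently represented vertex.  A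
neighbor `y` is kept at depth `d + 1` iff `d + 1 ≤ dist r y + k`; since the
minimal depth at which `y` occurs in the unfolding tree rooted at `r` is
`dist r y`, this is exactly the pruning condition
`depth(u) ≤ depth(w) + k` for all nodes `w` with `φ(u) = φ(w)`. -/
noncomputable def SimpleGraph.ntAux (G : SimpleGraph V) [Fintype V] (μ : V → X)
    (r : V) (k : ℕ) : ℕ → ℕ → V → LTree X
  | 0, _, x => .node (μ x) []
  | i+1, d, x => .node (μ x)
      (((G.neighborFinset x).filter (fun y => d + 1 ≤ G.dist r y + k)).toList.map
        (G.ntAux μ r k i (d+1)))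

/-- The `k`-redundant neighborhood tree `T_{i,k}^v` of height `i` of vertex `v`. -/
noncomputable def SimpleGraph.ntTree (G : SimpleGraph V) [Fintype V] (μ : V → X)
    (i k : ℕ) (v : V) : LTree X :=
  G.ntAux μ v k i 0 v

end Graph

section AuxLemmas

lemma LTree.countAt_node_zero {L : Type u} [DecidableEq L] (x a : L) (ts : List (LTree L)) :
    LTree.countAt x 0 (LTree.node a ts) = if a = x then 1 else 0 := by
  rw [LTree.countAt]

lemma LTree.countAt_node_succ {L : Type u} [DecidableEq L] (x a : L) (d : ℕ)
    (ts : List (LTree L)) :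
    LTree.countAt x (d + 1) (LTree.node a ts) = (ts.map (LTree.countAt x d)).sum := by
  rw [LTree.countAt]
  congr 1
  exact List.attach_map_val (l := ts) (f := LTree.countAt x d)

variable {V : Type u} [Fintype V] [DecidableEq V] (G : SimpleGraph V)

lemma countAt_unfolding_succ (v x : V) (i d : ℕ) :
    LTree.countAt v (d + 1) (G.unfoldingTree id (i + 1) x)
      = ∑ w ∈ G.neighborFinset x, LTree.countAt v d (G.unfoldingTree id i w) := by
  show LTree.countAt v (d + 1)
      (LTree.node (id x) ((G.neighborFinset x).toList.map (G.unfoldingTree id i))) = _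
  rw [LTree.countAt_node_succ, List.map_map, Finset.sum_map_toList]
  rfl

lemma exists_walk_of_countAt_ne_zero (v : V) :
    ∀ (i d : ℕ) (x : V), LTree.countAt v d (G.unfoldingTree id i x) ≠ 0 →
      d ≤ i ∧ ∃ p : G.Walk x v, p.length = d := by
  intro i
  induction i with
  | zero =>
    intro d x h
    match d with
    | 0 =>
      rw [show G.unfoldingTree id 0 x = LTree.node (id x) [] from rfl,
        LTree.countAt_node_zero] at h
      split_ifs at h with hxv
      · exact ⟨le_rfl, (hxv : x = v) ▸ ⟨SimpleGraph.Walk.nil, rfl⟩⟩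
      · exact absurd rfl h
    | d + 1 =>
      rw [show G.unfoldingTree id 0 x = LTree.node (id x) [] from rfl,
        LTree.countAt_node_succ] at h
      simp at h
  | succ i ih =>
    intro d x h
    match d with
    | 0 =>
      rw [show G.unfoldingTree id (i+1) x
            = LTree.node (id x) ((G.neighborFinset x).toList.map (G.unfoldingTree id i))
          from rfl, LTree.countAt_node_zero] at h
      split_ifs at h with hxv
      · exact ⟨Nat.zero_le _, (hxv : x = v) ▸ ⟨SimpleGraph.Walk.nil, rfl⟩⟩
      · exact absurd rfl h
    | d + 1 =>
      rw [countAt_unfolding_succ] at h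
      obtain ⟨w, hw, hwne⟩ := Finset.exists_ne_zero_of_sum_ne_zero h
      obtain ⟨hdi, p, hp⟩ := ih d w hwne
      refine ⟨Nat.succ_le_succ hdi, SimpleGraph.Walk.cons ?_ p, by rw [SimpleGraph.Walk.length_cons, hp]⟩
      exact (SimpleGraph.mem_neighborFinset G x w).mp hw

lemma countAt_unfolding_eq_adjMatrix (v : V) :
    ∀ (i d : ℕ) (x : V), d ≤ i →
      LTree.countAt v d (G.unfoldingTree id i x) = (G.adjMatrix ℕ ^ d) x v := by
  intro i
  induction i with
  | zero =>
    intro d x hdi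
    interval_cases d
    rw [show G.unfoldingTree id 0 x = LTree.node (id x) [] from rfl,
      LTree.countAt_node_zero, pow_zero, Matrix.one_apply]
    rfl
  | succ i ih =>
    intro d x hdi
    match d with
    | 0 =>
      rw [show G.unfoldingTree id (i+1) x
            = LTree.node (id x) ((G.neighborFinset x).toList.map (G.unfoldingTree id i))
          from rfl, LTree.countAt_node_zero, pow_zero, Matrix.one_apply]
      rfl
    | d + 1 =>
      rw [countAt_unfolding_succ, pow_succ', Matrix.mul_apply]
      rw [Finset.sum_congr rfl (fun w hw => ih d w (Nat.succ_le_succ_iff.mp hdi))]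
      rw [SimpleGraph.neighborFinset_eq_filter, Finset.sum_filter]
      refine Finset.sum_congr rfl fun w _ => ?_
      by_cases hadj : G.Adj x w <;> simp [hadj]

lemma countAt_ntAux_eq (hG : G.Connected) (u v : V) (k' : ℕ) :
    ∀ (i j d : ℕ) (x : V), d + j = G.dist u v →
      LTree.countAt v j (G.ntAux id u k' i d x)
        = LTree.countAt v j (G.unfoldingTree id i x) := by
  intro i
  induction i with
  | zero => intro j d x _; rfl
  | succ i ih =>
    intro j d x hdj
    match j with
    | 0 =>
      rw [show G.ntAux id u k' (i+1) d x
            = LTree.node (id x)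
              ((((G.neighborFinset x).filter (fun y => d + 1 ≤ G.dist u y + k')).toList).map
                (G.ntAux id u k' i (d+1))) from rfl,
        show G.unfoldingTree id (i+1) x
            = LTree.node (id x) ((G.neighborFinset x).toList.map (G.unfoldingTree id i))
          from rfl, LTree.countAt_node_zero, LTree.countAt_node_zero]
    | j + 1 =>
      rw [show G.ntAux id u k' (i+1) d x
            = LTree.node (id x)
              ((((G.neighborFinset x).filter (fun y => d + 1 ≤ G.dist u y + k')).toList).map
                (G.ntAux id u k' i (d+1))) from rfl,
        LTree.countAt_node_succ, List.map_map, Finset.sum_map_toList, countAt_unfolding_succ]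
      have hterm : ∀ y ∈ (G.neighborFinset x).filter (fun y => d + 1 ≤ G.dist u y + k'),
          (LTree.countAt v j ∘ G.ntAux id u k' i (d+1)) y
            = LTree.countAt v j (G.unfoldingTree id i y) := by
        intro y _
        exact ih j (d+1) y (by omega)
      rw [Finset.sum_congr rfl hterm]
      refine Finset.sum_filter_of_ne fun y hy hne => ?_
      obtain ⟨_, p, hp⟩ := exists_walk_of_countAt_ne_zero G v i j y hne
      have h1 : G.dist y v ≤ j := hp ▸ SimpleGraph.dist_le p
      have h2 : G.dist u v ≤ G.dist u y + G.dist y v := hG.dist_triangle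
      by_contra hlt
      omega

end AuxLemmas

/-- Let `u, v` be vertices of a connected graph at
shortest-path distance `k`.  Then every node of `F_k^u` representing `v` has
depth exactly `k`, and the number of nodes representing `v` is the same in
`F_k^u`, in `T_{k,1}^u` and in `T_{k,0}^u`, and equals the number of shortest
paths from `u` to `v`.  (Vertex labels `id`, so labels are represented
vertices.) -/
theorem count_eq_shortest_paths_at_dist {V : Type u} [Fintype V] [DecidableEq V]
    (G : SimpleGraph V) (hG : G.Connected) (u v : V) (k : ℕ)
    (hd : G.dist u v = k) :
    (∀ d : ℕ, LTree.countAt v d (G.unfoldingTree id k u) ≠ 0 → d = k) ∧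
    LTree.countAt v k (G.ntTree id k 0 u) = LTree.countAt v k (G.unfoldingTree id k u) ∧
    LTree.countAt v k (G.ntTree id k 1 u) = LTree.countAt v k (G.unfoldingTree id k u) ∧
    LTree.countAt v k (G.unfoldingTree id k u)
        = Nat.card {p : G.Walk u v // p.length = k ∧ p.IsPath} := by
  subst hd
  refine ⟨?_, ?_, ?_, ?_⟩
  · intro d h
    obtain ⟨hdk, p, hp⟩ := exists_walk_of_countAt_ne_zero G v _ d u h
    have := SimpleGraph.dist_le p
    omega
  · exact countAt_ntAux_eq G hG u v 0 _ _ 0 u (by omega)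
  · exact countAt_ntAux_eq G hG u v 1 _ _ 0 u (by omega)
  · rw [countAt_unfolding_eq_adjMatrix G v _ _ u le_rfl,
      SimpleGraph.adjMatrix_pow_apply_eq_card_walk]
    rw [Nat.card_congr (Equiv.subtypeEquivRight
      (q := fun p : G.Walk u v => p.length = G.dist u v)
      (fun p => ⟨fun h => h.1, fun h => ⟨h, p.isPath_of_length_eq_dist h⟩⟩))]
    rw [← Nat.card_eq_fintype_card]
    exact Nat.card_congr (Equiv.subtypeEquivRight fun p => Iff.rfl)
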